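/- Let A ∈ M_m ⊗ M_m be of the form A = ∑_{i,j} E_{ij} ⊗ a_{ij} E_{ji} with a_{ij} ≥ 0, and suppose that for all i,j, a_{ij} = 0 implies a_{ji} = 0. Then A is diagonalizable over ℂ. -/

import Mathlib

open Matrix Kronecker BigOperators

/-- If `A = ∑_{i,j} E_{ij} ⊗ a_{ij} E_{ji}` with `a_{ij} ≥ 0` and `a_{ij} = 0 → a_{ji} = 0`,
then `A` is diagonalizable over `ℂ`: it is similar to a diagonal matrix. -/
theorem diagonalizable_of_star_form (m : ℕ) (a : Fin m → Fin m → ℝ)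
    (ha : ∀ i j, 0 ≤ a i j) (hsym : ∀ i j, a i j = 0 → a j i = 0)
    (A : Matrix (Fin m × Fin m) (Fin m × Fin m) ℂ)
    (hA : A = ∑ i : Fin m, ∑ j : Fin m,
      (single i j (1 : ℂ)) ⊗ₖ (single j i ((a i j : ℝ) : ℂ))) :
    ∃ P D : Matrix (Fin m × Fin m) (Fin m × Fin m) ℂ,
      IsUnit P ∧ D.IsDiag ∧ A = P * D * P⁻¹ := by
  classical
  -- entrywise description of A
  have hEnt : ∀ p q : Fin m × Fin m,
      A p q = if q = (p.2, p.1) then ((a p.1 p.2 : ℝ) : ℂ) else 0 := by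
    intro p q
    subst hA
    simp only [Matrix.sum_apply, Matrix.kroneckerMap_apply, Matrix.single]
    simp only [Matrix.of_apply, ite_mul, one_mul, zero_mul]
    rw [Finset.sum_eq_single p.1]
    · rw [Finset.sum_eq_single q.1]
      · by_cases h : q = (p.2, p.1)
        · subst h; simp
        · have h2 : ¬(q.1 = p.2 ∧ p.1 = q.2) := fun hx => h (Prod.ext hx.1 hx.2.symm)
          simp [h, h2]
      · intro b _ hb; simp [hb]
      · simp
    · intro b _ hb
      rw [Finset.sum_eq_zero]
      intro c _
      simp [hb]
    · simp
  -- the scaling vector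
  set d : Fin m × Fin m → ℂ :=
    fun p => if a p.1 p.2 = 0 then 1 else ((Real.sqrt (a p.1 p.2) : ℝ) : ℂ) with hd
  have hd0 : ∀ p, d p ≠ 0 := by
    intro p
    simp only [hd]
    split_ifs with h
    · exact one_ne_zero
    · simpa using Real.sqrt_ne_zero'.2 (lt_of_le_of_ne (ha p.1 p.2) (Ne.symm h))
  have hdstar : ∀ p, star (d p) = d p := by
    intro p
    simp only [hd]
    split_ifs <;> simp
  have hdsq : ∀ p, a p.1 p.2 ≠ 0 → d p * d p = ((a p.1 p.2 : ℝ) : ℂ) := by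
    intro p h
    simp only [hd, if_neg h, ← Complex.ofReal_mul, Real.mul_self_sqrt (ha p.1 p.2)]
  set D : Matrix (Fin m × Fin m) (Fin m × Fin m) ℂ := Matrix.diagonal d with hD
  set D' : Matrix (Fin m × Fin m) (Fin m × Fin m) ℂ :=
    Matrix.diagonal (fun p => (d p)⁻¹) with hD'
  have hD'D : D' * D = 1 := by
    rw [hD, hD', Matrix.diagonal_mul_diagonal]
    rw [show (fun p => (d p)⁻¹ * d p) = fun _ => (1 : ℂ) from
      funext fun p => inv_mul_cancel₀ (hd0 p)]
    exact Matrix.diagonal_one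
  have hDD' : D * D' = 1 := by
    rw [hD, hD', Matrix.diagonal_mul_diagonal]
    rw [show (fun p => d p * (d p)⁻¹) = fun _ => (1 : ℂ) from
      funext fun p => mul_inv_cancel₀ (hd0 p)]
    exact Matrix.diagonal_one
  set M : Matrix (Fin m × Fin m) (Fin m × Fin m) ℂ := D' * A * D with hM
  have hMEnt : ∀ p q, M p q = (d p)⁻¹ * A p q * d q := by
    intro p q
    rw [hM, hD, hD', Matrix.mul_apply]
    simp [Matrix.diagonal_mul, Matrix.mul_diagonal, Matrix.diagonal_apply, Finset.sum_ite_eq,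
      mul_comm]
  -- M is Hermitian
  have hHerm : M.IsHermitian := by
    ext p q
    rw [Matrix.conjTranspose_apply, hMEnt, hMEnt]
    rw [star_mul', star_mul', hdstar, star_inv₀, hdstar]
    by_cases hq : q = (p.2, p.1)
    · subst hq
      have hApq : A p (p.2, p.1) = ((a p.1 p.2 : ℝ) : ℂ) := by rw [hEnt]; simp
      have hAqp : A (p.2, p.1) p = ((a p.2 p.1 : ℝ) : ℂ) := by rw [hEnt]; simp
      rw [hApq, hAqp, Complex.star_def, Complex.conj_ofReal]
      by_cases h0 : a p.1 p.2 = 0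
      · have h0' : a p.2 p.1 = 0 := hsym _ _ h0
        simp [h0, h0']
      · have h0' : a p.2 p.1 ≠ 0 := fun hc => h0 (hsym _ _ hc)
        have e1 := hdsq p h0
        have e2 : d (p.2, p.1) * d (p.2, p.1) = ((a p.2 p.1 : ℝ) : ℂ) := hdsq (p.2, p.1) h0'
        rw [inv_mul_eq_div, inv_mul_eq_div, div_mul_eq_mul_div, div_mul_eq_mul_div,
          div_eq_div_iff (hd0 _) (hd0 _), mul_assoc, e1, mul_assoc, e2]
        exact mul_comm _ _
    · have hq' : ¬ p = (q.2, q.1) := fun hc => hq (by rw [hc])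
      have hApq : A p q = 0 := by rw [hEnt, if_neg hq]
      have hAqp : A q p = 0 := by rw [hEnt, if_neg hq']
      simp [hApq, hAqp]
  -- spectral theorem for M
  set U : Matrix (Fin m × Fin m) (Fin m × Fin m) ℂ :=
    (hHerm.eigenvectorUnitary : Matrix (Fin m × Fin m) (Fin m × Fin m) ℂ) with hU
  have hU1 : star U * U = 1 :=
    (Matrix.mem_unitaryGroup_iff').mp hHerm.eigenvectorUnitary.2
  have hU2 : U * star U = 1 :=
    (Matrix.mem_unitaryGroup_iff).mp hHerm.eigenvectorUnitary.2
  have hspec : M = U * Matrix.diagonal (RCLike.ofReal ∘ hHerm.eigenvalues) * star U :=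
    hHerm.spectral_theorem
  -- assemble
  refine ⟨D * U, Matrix.diagonal (RCLike.ofReal ∘ hHerm.eigenvalues), ?_,
    Matrix.isDiag_diagonal _, ?_⟩
  · exact (Matrix.isUnit_iff_isUnit_det _).mpr (Matrix.isUnit_det_of_left_inverse
      (B := star U * D') (by rw [mul_assoc, ← mul_assoc D', hD'D, one_mul, hU1]))
  · have hPinv : (D * U)⁻¹ = star U * D' :=
      Matrix.inv_eq_left_inv (by rw [mul_assoc, ← mul_assoc D', hD'D, one_mul, hU1])
    rw [hPinv]
    have hAeq : A = D * M * D' := by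
      rw [hM]
      calc A = 1 * A * 1 := by rw [one_mul, mul_one]
        _ = (D * D') * A * (D * D') := by rw [hDD']
        _ = D * (D' * A * D) * D' := by noncomm_ring
    have h2 : D * M * D' =
        D * (U * Matrix.diagonal (RCLike.ofReal ∘ hHerm.eigenvalues) * star U) * D' := by
      exact congrArg (fun X => D * X * D') hspec
    rw [hAeq, h2]
    noncomm_ring
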